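/- (Union lemma: joint local correctability of two regions with disjoint recovery supports.) Let H = H_{A₁} ⊗ H_{B₁} ⊗ H_{A₂} ⊗ H_{B₂} ⊗ H_E and H_R be finite-dimensional Hilbert spaces, and let S be a set of density matrices on H ⊗ H_R. Suppose there are quantum channels 𝓡₁ : B(H_{B₁}) → B(H_{A₁} ⊗ H_{B₁}) and 𝓡₂ : B(H_{B₂}) → B(H_{A₂} ⊗ H_{B₂}) and ε₁, ε₂ ≥ 0 such that for every ρ ∈ S: ‖(𝓡₁ ⊗ id)(tr_{A₁} ρ) − ρ‖₁ ≤ ε₁ and ‖(𝓡₂ ⊗ id)(tr_{A₂} ρ) − ρ‖₁ ≤ ε₂ (the identity factors acting on all remaining tensor factors). Then for every ρ ∈ S: ‖((𝓡₁ ⊗ 𝓡₂) ⊗ id)(tr_{A₁A₂} ρ) − ρ‖₁ ≤ ε₁ + ε₂. -/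

import Mathlib

open scoped Kronecker ComplexOrder Matrix Classical

set_option synthInstance.maxSize 400
set_option maxHeartbeats 1000000
set_option linter.unusedSectionVars false

/-- The operator norm of a matrix, i.e. the norm of the induced linear map on Euclidean space. -/
noncomputable def opNorm {n : Type} [Fintype n] [DecidableEq n] (A : Matrix n n ℂ) : ℝ :=
  ‖Matrix.toEuclideanCLM (𝕜 := ℂ) A‖

/-- The positive-semidefinite square root (junk value `0` off the PSD cone). -/
noncomputable def psdSqrt {n : Type} [Fintype n] [DecidableEq n] (A : Matrix n n ℂ) :
    Matrix n n ℂ :=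
  if h : A.PosSemidef then
    (h.1.eigenvectorUnitary : Matrix n n ℂ) *
      Matrix.diagonal (fun i => ((Real.sqrt (h.1.eigenvalues i) : ℝ) : ℂ)) *
      (star (h.1.eigenvectorUnitary : Matrix n n ℂ))
  else 0

/-- The trace norm `‖A‖₁ = tr √(AᴴA)`. -/
noncomputable def traceNorm {n : Type} [Fintype n] [DecidableEq n] (A : Matrix n n ℂ) : ℝ :=
  ((psdSqrt (Aᴴ * A)).trace).re

/-- Fidelity `F(ρ,σ) = tr √(√ρ σ √ρ)`. -/
noncomputable def fidelity {n : Type} [Fintype n] [DecidableEq n] (ρ σ : Matrix n n ℂ) : ℝ :=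
  ((psdSqrt (psdSqrt ρ * σ * psdSqrt ρ)).trace).re

/-- Bures distance `𝔅(ρ,σ) = √(2(1 − F(ρ,σ)))`. -/
noncomputable def bures {n : Type} [Fintype n] [DecidableEq n] (ρ σ : Matrix n n ℂ) : ℝ :=
  Real.sqrt (2 * (1 - fidelity ρ σ))

/-- The rank-one projector `|ψ⟩⟨ψ|`. -/
def outer {n : Type} [Fintype n] (ψ : n → ℂ) : Matrix n n ℂ :=
  Matrix.of fun i j => ψ i * (starRingEnd ℂ) (ψ j)

/-- Complete positivity of a linear map between matrix algebras: for every `k`, the map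
`id_{M_k} ⊗ Φ` (acting blockwise) preserves positive semidefiniteness. -/
def IsCompletelyPositive {n m : Type} [Fintype n] [DecidableEq n] [Fintype m] [DecidableEq m]
    (Φ : Matrix n n ℂ →ₗ[ℂ] Matrix m m ℂ) : Prop :=
  ∀ (k : ℕ) (M : Matrix (Fin k × n) (Fin k × n) ℂ), M.PosSemidef →
    (Matrix.of fun (p q : Fin k × m) =>
      (Φ (Matrix.of fun a b => M (p.1, a) (q.1, b))) p.2 q.2).PosSemidef

namespace UL
open Matrix Complex
open scoped MatrixOrder

variable {n : Type} [Fintype n] [DecidableEq n]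

lemma psdSqrt_eq_sqrt {A : Matrix n n ℂ} (hA : A.PosSemidef) : psdSqrt A = CFC.sqrt A := by
  rw [CFC.sqrt_eq_real_sqrt A hA.nonneg, cfcₙ_eq_cfc, hA.1.cfc_eq, psdSqrt, dif_pos hA]
  simp [Matrix.IsHermitian.cfc, Function.comp_def]

lemma psd_add {A B : Matrix n n ℂ} (hA : A.PosSemidef) (hB : B.PosSemidef) :
    (A + B).PosSemidef :=
  hA.add hB

lemma psd_sum {ι : Type*} (s : Finset ι) (f : ι → Matrix n n ℂ)
    (h : ∀ i ∈ s, (f i).PosSemidef) : (∑ i ∈ s, f i).PosSemidef := by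
  classical
  induction s using Finset.induction_on with
  | empty => simpa using Matrix.PosSemidef.zero
  | insert _ _ hx ih =>
    rw [Finset.sum_insert hx]
    exact psd_add (h _ (Finset.mem_insert_self _ _))
      (ih fun i hi => h i (Finset.mem_insert_of_mem hi))

lemma psd_trace_re_nonneg {A : Matrix n n ℂ} (hA : A.PosSemidef) : 0 ≤ A.trace.re := by
  rw [Matrix.trace, Complex.re_sum]
  refine Finset.sum_nonneg fun i _ => ?_
  have h := hA.diag_nonneg (i := i)
  exact (Complex.le_def.mp h).1

lemma trace_mul_psd_re_nonneg {A B : Matrix n n ℂ} (hA : A.PosSemidef) (hB : B.PosSemidef) :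
    0 ≤ ((A * B).trace).re := by
  have h1 : A * B = CFC.sqrt A * (CFC.sqrt A * B) := by
    rw [← mul_assoc, CFC.sqrt_mul_sqrt_self A hA.nonneg]
  have h2 : (A * B).trace = (CFC.sqrt A * B * CFC.sqrt A).trace := by
    rw [h1, Matrix.trace_mul_comm, mul_assoc]
  rw [h2]
  have h3 : (CFC.sqrt A * B * CFC.sqrt A).PosSemidef := by
    have := hB.mul_mul_conjTranspose_same (CFC.sqrt A)
    rwa [(CFC.sqrt_nonneg A).posSemidef.1] at this
  exact psd_trace_re_nonneg h3

lemma psdSqrt_eq {B A : Matrix n n ℂ} (hA : A.PosSemidef) (h : A ^ 2 = B) : psdSqrt B = A := by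
  have hB : B.PosSemidef := h ▸ hA.pow 2
  rw [psdSqrt_eq_sqrt hB]
  exact CFC.sqrt_unique (by rw [← h, sq]) hA.nonneg

lemma traceNorm_psd {A : Matrix n n ℂ} (hA : A.PosSemidef) : traceNorm A = A.trace.re := by
  have h : A ^ 2 = Aᴴ * A := by rw [pow_two, hA.1]
  rw [traceNorm, psdSqrt_eq hA h]

lemma traceNorm_neg (A : Matrix n n ℂ) : traceNorm (-A) = traceNorm A := by
  simp [traceNorm, Matrix.conjTranspose_neg, Matrix.neg_mul, Matrix.mul_neg, neg_neg]

end UL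

namespace UL
open Matrix Complex

variable {n : Type} [Fintype n] [DecidableEq n]

/-- Conjugation of a real diagonal by the eigenvector unitary of a Hermitian matrix. -/
noncomputable def conjU {X : Matrix n n ℂ} (hX : X.IsHermitian) (d : n → ℝ) : Matrix n n ℂ :=
  (hX.eigenvectorUnitary : Matrix n n ℂ) * Matrix.diagonal (fun i => (d i : ℂ)) *
    star (hX.eigenvectorUnitary : Matrix n n ℂ)

lemma conjU_psd {X : Matrix n n ℂ} (hX : X.IsHermitian) {d : n → ℝ} (hd : ∀ i, 0 ≤ d i) :
    (conjU hX d).PosSemidef := by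
  have hdiag : (Matrix.diagonal (fun i => ((d i : ℝ) : ℂ))).PosSemidef :=
    Matrix.PosSemidef.diagonal fun i => by
      simpa using Complex.zero_le_real.mpr (hd i)
  have := hdiag.mul_mul_conjTranspose_same (hX.eigenvectorUnitary : Matrix n n ℂ)
  rw [conjU, Matrix.star_eq_conjTranspose]
  exact this

lemma conjU_sub {X : Matrix n n ℂ} (hX : X.IsHermitian) (d e : n → ℝ) :
    conjU hX d - conjU hX e = conjU hX (d - e) := by
  simp only [conjU, ← Matrix.sub_mul, ← Matrix.mul_sub, Matrix.diagonal_sub]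
  congr 2
  ext i
  push_cast
  simp

lemma conjU_add {X : Matrix n n ℂ} (hX : X.IsHermitian) (d e : n → ℝ) :
    conjU hX d + conjU hX e = conjU hX (d + e) := by
  simp only [conjU, ← Matrix.add_mul, ← Matrix.mul_add, Matrix.diagonal_add]
  congr 2
  ext i
  push_cast
  simp

lemma conjU_mul {X : Matrix n n ℂ} (hX : X.IsHermitian) (d e : n → ℝ) :
    conjU hX d * conjU hX e = conjU hX (d * e) := by
  have hU : star (hX.eigenvectorUnitary : Matrix n n ℂ) *
      (hX.eigenvectorUnitary : Matrix n n ℂ) = 1 := by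
    simpa using unitary.coe_star_mul_self hX.eigenvectorUnitary
  calc conjU hX d * conjU hX e
      = (hX.eigenvectorUnitary : Matrix n n ℂ) * (Matrix.diagonal (fun i => (d i : ℂ)) *
        ((star (hX.eigenvectorUnitary : Matrix n n ℂ) *
          (hX.eigenvectorUnitary : Matrix n n ℂ)) * Matrix.diagonal (fun i => (e i : ℂ)))) *
        star (hX.eigenvectorUnitary : Matrix n n ℂ) := by
        simp only [conjU, Matrix.mul_assoc]
    _ = conjU hX (d * e) := by
        rw [hU, one_mul, Matrix.diagonal_mul_diagonal, conjU]
        congr 2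
        ext i
        push_cast
        simp

lemma conjU_trace {X : Matrix n n ℂ} (hX : X.IsHermitian) (d : n → ℝ) :
    (conjU hX d).trace = ∑ i, (d i : ℂ) := by
  have hU : star (hX.eigenvectorUnitary : Matrix n n ℂ) *
      (hX.eigenvectorUnitary : Matrix n n ℂ) = 1 := by
    simpa using unitary.coe_star_mul_self hX.eigenvectorUnitary
  rw [conjU, Matrix.trace_mul_comm, ← Matrix.mul_assoc, hU, one_mul, Matrix.trace_diagonal]

lemma conjU_one {X : Matrix n n ℂ} (hX : X.IsHermitian) :
    conjU hX (fun _ => 1) = 1 := by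
  have hU : (hX.eigenvectorUnitary : Matrix n n ℂ) *
      star (hX.eigenvectorUnitary : Matrix n n ℂ) = 1 := by
    simpa using unitary.coe_mul_star_self hX.eigenvectorUnitary
  rw [conjU]
  simpa [Matrix.diagonal_one] using hU

lemma conjU_self {X : Matrix n n ℂ} (hX : X.IsHermitian) :
    conjU hX hX.eigenvalues = X := by
  rw [conjU]
  exact (hX.spectral_theorem).symm

lemma conjU_herm {X : Matrix n n ℂ} (hX : X.IsHermitian) (d : n → ℝ) :
    (conjU hX d).IsHermitian := by
  have hD : star (fun i => ((d i : ℝ) : ℂ)) = fun i => ((d i : ℝ) : ℂ) := by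
    funext i; simp
  rw [Matrix.IsHermitian, conjU, Matrix.conjTranspose_mul, Matrix.conjTranspose_mul,
    Matrix.diagonal_conjTranspose, hD, Matrix.star_eq_conjTranspose,
    Matrix.conjTranspose_conjTranspose, Matrix.mul_assoc]

end UL

namespace UL
open Matrix Complex

variable {n : Type} [Fintype n] [DecidableEq n]

noncomputable def ppart {X : Matrix n n ℂ} (hX : X.IsHermitian) : Matrix n n ℂ :=
  conjU hX (fun i => max (hX.eigenvalues i) 0)

noncomputable def npart {X : Matrix n n ℂ} (hX : X.IsHermitian) : Matrix n n ℂ :=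
  conjU hX (fun i => max (-hX.eigenvalues i) 0)

noncomputable def signm {X : Matrix n n ℂ} (hX : X.IsHermitian) : Matrix n n ℂ :=
  conjU hX (fun i => if 0 ≤ hX.eigenvalues i then 1 else -1)

lemma ppart_psd {X : Matrix n n ℂ} (hX : X.IsHermitian) : (ppart hX).PosSemidef :=
  conjU_psd hX fun i => le_max_right _ _

lemma npart_psd {X : Matrix n n ℂ} (hX : X.IsHermitian) : (npart hX).PosSemidef :=
  conjU_psd hX fun i => le_max_right _ _

lemma ppart_sub_npart {X : Matrix n n ℂ} (hX : X.IsHermitian) : ppart hX - npart hX = X := by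
  rw [ppart, npart, conjU_sub]
  have h : ((fun i => max (hX.eigenvalues i) 0) - fun i => max (-hX.eigenvalues i) 0)
      = hX.eigenvalues := by
    funext i
    simp only [Pi.sub_apply]
    rcases le_total 0 (hX.eigenvalues i) with h | h
    · rw [max_eq_left h, max_eq_right (neg_nonpos.mpr h), sub_zero]
    · rw [max_eq_right h, max_eq_left (neg_nonneg.mpr h), zero_sub, neg_neg]
  rw [h, conjU_self]

lemma abs_eq_max_add {a : ℝ} : |a| = max a 0 + max (-a) 0 := by
  rcases le_total 0 a with h | h
  · rw [_root_.abs_of_nonneg h, max_eq_left h, max_eq_right (neg_nonpos.mpr h), add_zero]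
  · rw [_root_.abs_of_nonpos h, max_eq_right h, max_eq_left (neg_nonneg.mpr h), zero_add]

lemma traceNorm_herm {X : Matrix n n ℂ} (hX : X.IsHermitian) :
    traceNorm X = ((ppart hX).trace).re + ((npart hX).trace).re := by
  have habs : (conjU hX (fun i => |hX.eigenvalues i|)).PosSemidef :=
    conjU_psd hX fun i => abs_nonneg _
  have hXX : X * X = conjU hX (hX.eigenvalues * hX.eigenvalues) := by
    rw [← conjU_mul, conjU_self]
  have hsq : (conjU hX (fun i => |hX.eigenvalues i|)) ^ 2 = Xᴴ * X := by
    have habs2 : (fun i => |hX.eigenvalues i|) * (fun i => |hX.eigenvalues i|)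
        = hX.eigenvalues * hX.eigenvalues := by
      funext i; exact abs_mul_abs_self _
    rw [pow_two, conjU_mul, hX.eq, hXX, habs2]
  rw [traceNorm, psdSqrt_eq habs hsq, ppart, npart, conjU_trace, conjU_trace, conjU_trace]
  rw [Complex.re_sum, Complex.re_sum, Complex.re_sum, ← Finset.sum_add_distrib]
  refine Finset.sum_congr rfl fun i _ => ?_
  simp only [Complex.ofReal_re]
  exact abs_eq_max_add

lemma signm_mul_self_eq {X : Matrix n n ℂ} (hX : X.IsHermitian) :
    ((signm hX * X).trace).re = traceNorm X := by
  have h : signm hX * X = conjU hX (fun i => |hX.eigenvalues i|) := by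
    have h2 : signm hX * conjU hX hX.eigenvalues = conjU hX (fun i => |hX.eigenvalues i|) := by
      have h3 : ((fun i => if 0 ≤ hX.eigenvalues i then (1:ℝ) else -1) * hX.eigenvalues)
          = fun i => |hX.eigenvalues i| := by
        funext i
        simp only [Pi.mul_apply]
        rcases le_or_gt 0 (hX.eigenvalues i) with h | h
        · rw [if_pos h, _root_.abs_of_nonneg h, one_mul]
        · rw [if_neg (not_le.mpr h), _root_.abs_of_neg h]; ring
      rw [signm, conjU_mul, h3]
    rwa [conjU_self] at h2
  rw [h, conjU_trace, traceNorm_herm hX, ppart, npart, conjU_trace, conjU_trace]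
  rw [Complex.re_sum, Complex.re_sum, Complex.re_sum, ← Finset.sum_add_distrib]
  refine Finset.sum_congr rfl fun i _ => ?_
  simp only [Complex.ofReal_re]
  exact abs_eq_max_add

lemma one_sub_signm_psd {X : Matrix n n ℂ} (hX : X.IsHermitian) :
    ((1 : Matrix n n ℂ) - signm hX).PosSemidef := by
  rw [← conjU_one hX, signm, conjU_sub]
  refine conjU_psd hX fun i => ?_
  simp only [Pi.sub_apply]
  rcases le_or_gt 0 (hX.eigenvalues i) with h | h
  · rw [if_pos h]; norm_num
  · rw [if_neg (not_le.mpr h)]; norm_num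

lemma one_add_signm_psd {X : Matrix n n ℂ} (hX : X.IsHermitian) :
    ((1 : Matrix n n ℂ) + signm hX).PosSemidef := by
  rw [← conjU_one hX, signm, conjU_add]
  refine conjU_psd hX fun i => ?_
  simp only [Pi.add_apply]
  rcases le_or_gt 0 (hX.eigenvalues i) with h | h
  · rw [if_pos h]; norm_num
  · rw [if_neg (not_le.mpr h)]; norm_num

lemma trace_delta_le {X : Matrix n n ℂ} (hX : X.IsHermitian) {Δ : Matrix n n ℂ}
    (h1 : ((1 : Matrix n n ℂ) - Δ).PosSemidef) (h2 : ((1 : Matrix n n ℂ) + Δ).PosSemidef) :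
    ((Δ * X).trace).re ≤ traceNorm X := by
  have hP := ppart_psd hX
  have hN := npart_psd hX
  have hb1 : ((Δ * ppart hX).trace).re ≤ ((ppart hX).trace).re := by
    have := trace_mul_psd_re_nonneg h1 hP
    rw [Matrix.sub_mul, Matrix.one_mul, Matrix.trace_sub, Complex.sub_re] at this
    linarith
  have hb2 : -((npart hX).trace).re ≤ ((Δ * npart hX).trace).re := by
    have := trace_mul_psd_re_nonneg h2 hN
    rw [Matrix.add_mul, Matrix.one_mul, Matrix.trace_add, Complex.add_re] at this
    linarith
  have hXe : Δ * X = Δ * ppart hX - Δ * npart hX := by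
    rw [← Matrix.mul_sub, ppart_sub_npart]
  rw [hXe, Matrix.trace_sub, Complex.sub_re, traceNorm_herm hX]
  linarith

lemma traceNorm_add_le {X Y : Matrix n n ℂ} (hX : X.IsHermitian) (hY : Y.IsHermitian) :
    traceNorm (X + Y) ≤ traceNorm X + traceNorm Y := by
  have hXY : (X + Y).IsHermitian := hX.add hY
  rw [← signm_mul_self_eq hXY, Matrix.mul_add, Matrix.trace_add, Complex.add_re]
  exact add_le_add (trace_delta_le hX (one_sub_signm_psd hXY) (one_add_signm_psd hXY))
    (trace_delta_le hY (one_sub_signm_psd hXY) (one_add_signm_psd hXY))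

end UL

section UnionLemma

variable {A1 B1 A2 B2 Ei Ri : Type} [Fintype A1] [DecidableEq A1] [Fintype B1] [DecidableEq B1]
  [Fintype A2] [DecidableEq A2] [Fintype B2] [DecidableEq B2] [Fintype Ei] [DecidableEq Ei]
  [Fintype Ri] [DecidableEq Ri]

-- The total Hilbert space is `H ⊗ H_R` with
-- `H = H_{A₁} ⊗ H_{B₁} ⊗ H_{A₂} ⊗ H_{B₂} ⊗ H_E`, indexed by
-- `Q = A1 × (B1 × (A2 × (B2 × (Ei × Ri))))`.

/-- `tr_{A₁} ρ`. -/
noncomputable def ptrA1 (ρ : Matrix (A1 × (B1 × (A2 × (B2 × (Ei × Ri)))))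
      (A1 × (B1 × (A2 × (B2 × (Ei × Ri))))) ℂ) :
    Matrix (B1 × (A2 × (B2 × (Ei × Ri)))) (B1 × (A2 × (B2 × (Ei × Ri)))) ℂ :=
  Matrix.of fun p q => ∑ a : A1, ρ (a, p) (a, q)

/-- `tr_{A₂} ρ`. -/
noncomputable def ptrA2 (ρ : Matrix (A1 × (B1 × (A2 × (B2 × (Ei × Ri)))))
      (A1 × (B1 × (A2 × (B2 × (Ei × Ri))))) ℂ) :
    Matrix (A1 × (B1 × (B2 × (Ei × Ri)))) (A1 × (B1 × (B2 × (Ei × Ri)))) ℂ :=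
  Matrix.of fun p q => ∑ a : A2,
    ρ (p.1, (p.2.1, (a, p.2.2))) (q.1, (q.2.1, (a, q.2.2)))

/-- `tr_{A₁A₂} ρ`. -/
noncomputable def ptrA1A2 (ρ : Matrix (A1 × (B1 × (A2 × (B2 × (Ei × Ri)))))
      (A1 × (B1 × (A2 × (B2 × (Ei × Ri))))) ℂ) :
    Matrix (B1 × (B2 × (Ei × Ri))) (B1 × (B2 × (Ei × Ri))) ℂ :=
  Matrix.of fun p q => ∑ a1 : A1, ∑ a2 : A2,
    ρ (a1, (p.1, (a2, p.2))) (a1, (q.1, (a2, q.2)))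

/-- `(𝓡₁ ⊗ id)(M)`, where `𝓡₁ : B(H_{B₁}) → B(H_{A₁} ⊗ H_{B₁})` has Kraus operators `F k`
and the identity acts on all remaining tensor factors. -/
noncomputable def applyRec1 {n : ℕ} (F : Fin n → Matrix (A1 × B1) B1 ℂ)
    (M : Matrix (B1 × (A2 × (B2 × (Ei × Ri)))) (B1 × (A2 × (B2 × (Ei × Ri)))) ℂ) :
    Matrix (A1 × (B1 × (A2 × (B2 × (Ei × Ri)))))
      (A1 × (B1 × (A2 × (B2 × (Ei × Ri))))) ℂ :=
  Matrix.of fun p q => ∑ k, ∑ b : B1, ∑ b' : B1,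
    F k (p.1, p.2.1) b * M (b, p.2.2) (b', q.2.2) * (starRingEnd ℂ) (F k (q.1, q.2.1) b')

/-- `(𝓡₂ ⊗ id)(M)`, where `𝓡₂ : B(H_{B₂}) → B(H_{A₂} ⊗ H_{B₂})` has Kraus operators `G k`. -/
noncomputable def applyRec2 {n : ℕ} (G : Fin n → Matrix (A2 × B2) B2 ℂ)
    (M : Matrix (A1 × (B1 × (B2 × (Ei × Ri)))) (A1 × (B1 × (B2 × (Ei × Ri)))) ℂ) :
    Matrix (A1 × (B1 × (A2 × (B2 × (Ei × Ri)))))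
      (A1 × (B1 × (A2 × (B2 × (Ei × Ri))))) ℂ :=
  Matrix.of fun p q => ∑ k, ∑ b : B2, ∑ b' : B2,
    G k (p.2.2.1, p.2.2.2.1) b *
      M (p.1, (p.2.1, (b, p.2.2.2.2))) (q.1, (q.2.1, (b', q.2.2.2.2))) *
      (starRingEnd ℂ) (G k (q.2.2.1, q.2.2.2.1) b')

/-- `((𝓡₁ ⊗ 𝓡₂) ⊗ id)(M)`. -/
noncomputable def applyRec12 {n1 n2 : ℕ} (F : Fin n1 → Matrix (A1 × B1) B1 ℂ)
    (G : Fin n2 → Matrix (A2 × B2) B2 ℂ)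
    (M : Matrix (B1 × (B2 × (Ei × Ri))) (B1 × (B2 × (Ei × Ri))) ℂ) :
    Matrix (A1 × (B1 × (A2 × (B2 × (Ei × Ri)))))
      (A1 × (B1 × (A2 × (B2 × (Ei × Ri))))) ℂ :=
  Matrix.of fun p q => ∑ k1, ∑ k2, ∑ b1 : B1, ∑ b1' : B1, ∑ b2 : B2, ∑ b2' : B2,
    F k1 (p.1, p.2.1) b1 * G k2 (p.2.2.1, p.2.2.2.1) b2 *
      M (b1, (b2, p.2.2.2.2)) (b1', (b2', q.2.2.2.2)) *
      (starRingEnd ℂ) (G k2 (q.2.2.1, q.2.2.2.1) b2') *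
      (starRingEnd ℂ) (F k1 (q.1, q.2.1) b1')

section UnionLemmaAux

variable {A1 B1 A2 B2 Ei Ri : Type} [Fintype A1] [DecidableEq A1] [Fintype B1] [DecidableEq B1]
  [Fintype A2] [DecidableEq A2] [Fintype B2] [DecidableEq B2] [Fintype Ei] [DecidableEq Ei]
  [Fintype Ri] [DecidableEq Ri]

/-- Kraus operators of the composite channel `σ ↦ (𝓡₂ ⊗ id)(tr_{A₂} σ)`. -/
noncomputable def krausE {n2 : ℕ} (G : Fin n2 → Matrix (A2 × B2) B2 ℂ) (k : Fin n2) (a : A2) :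
    Matrix (A1 × (B1 × (A2 × (B2 × (Ei × Ri)))))
      (A1 × (B1 × (A2 × (B2 × (Ei × Ri))))) ℂ :=
  Matrix.of fun p r =>
    (if r.1 = p.1 then (1:ℂ) else 0) * ((if r.2.1 = p.2.1 then (1:ℂ) else 0) *
    ((if r.2.2.1 = a then (1:ℂ) else 0) * ((if r.2.2.2.2 = p.2.2.2.2 then (1:ℂ) else 0) *
    G k (p.2.2.1, p.2.2.2.1) r.2.2.2.1)))

lemma kraus_rep {n2 : ℕ} (G : Fin n2 → Matrix (A2 × B2) B2 ℂ)
    (X : Matrix (A1 × (B1 × (A2 × (B2 × (Ei × Ri)))))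
      (A1 × (B1 × (A2 × (B2 × (Ei × Ri))))) ℂ) :
    applyRec2 G (ptrA2 X) = ∑ k, ∑ a : A2, krausE G k a * X * (krausE G k a)ᴴ := by
  ext p q
  simp only [applyRec2, ptrA2, Matrix.of_apply, Matrix.sum_apply, Matrix.mul_apply,
    Matrix.conjTranspose_apply, krausE, Fintype.sum_prod_type, ite_mul, mul_ite, one_mul,
    mul_one, zero_mul, mul_zero, map_mul, apply_ite (star : ℂ → ℂ), star_zero, map_one, map_zero, starRingEnd_apply,
    Finset.sum_ite_irrel, Finset.sum_const_zero, Finset.sum_ite_eq, Finset.sum_ite_eq',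
    Finset.mem_univ, if_true, Finset.mul_sum, Finset.sum_mul]
  refine Finset.sum_congr rfl fun k _ => ?_
  conv_lhs => rw [Finset.sum_comm]
  conv_rhs => rw [Finset.sum_comm]
  exact Finset.sum_congr rfl fun b2' _ => Finset.sum_comm

lemma kraus_complete {n2 : ℕ} (G : Fin n2 → Matrix (A2 × B2) B2 ℂ)
    (hG : ∑ k, (G k)ᴴ * G k = 1) :
    ∑ k, ∑ a : A2, (krausE (A1 := A1) (B1 := B1) (Ei := Ei) (Ri := Ri) G k a)ᴴ * krausE G k a
      = 1 := by
  have hG' : ∀ b b' : B2, (∑ k, ∑ c : A2 × B2, star (G k c b) * G k c b')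
      = if b = b' then 1 else 0 := by
    intro b b'
    have h := congrArg (fun M => M b b') hG
    simpa [Matrix.sum_apply, Matrix.mul_apply, Matrix.conjTranspose_apply,
      Matrix.one_apply] using h
  ext r s
  simp only [Matrix.sum_apply, Matrix.mul_apply, Matrix.conjTranspose_apply, krausE,
    Matrix.of_apply, Fintype.sum_prod_type, ite_mul, mul_ite, one_mul, mul_one, zero_mul,
    mul_zero, map_mul, apply_ite (star : ℂ → ℂ), star_zero, star_one,
    Finset.sum_ite_irrel, Finset.sum_const_zero, Finset.sum_ite_eq, Finset.sum_ite_eq',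
    Finset.mem_univ, if_true, Matrix.one_apply]
  have h2 : (∑ x : Fin n2, ∑ x_1 : A2, ∑ x_2 : B2,
      star (G x (x_1, x_2) r.2.2.2.1) * G x (x_1, x_2) s.2.2.2.1)
      = if r.2.2.2.1 = s.2.2.2.1 then 1 else 0 := by
    simpa [Fintype.sum_prod_type] using hG' r.2.2.2.1 s.2.2.2.1
  rw [h2]
  rcases r with ⟨r1, r2, r3, r4, r5⟩
  rcases s with ⟨s1, s2, s3, s4, s5⟩
  simp only [Prod.mk.injEq]
  split_ifs <;> simp_all

lemma psi2_psd {n2 : ℕ} (G : Fin n2 → Matrix (A2 × B2) B2 ℂ)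
    {X : Matrix (A1 × (B1 × (A2 × (B2 × (Ei × Ri)))))
      (A1 × (B1 × (A2 × (B2 × (Ei × Ri))))) ℂ} (hX : X.PosSemidef) :
    (applyRec2 G (ptrA2 X)).PosSemidef := by
  rw [kraus_rep]
  exact UL.psd_sum _ _ fun k _ => UL.psd_sum _ _ fun a _ =>
    hX.mul_mul_conjTranspose_same _

lemma psi2_trace {n2 : ℕ} (G : Fin n2 → Matrix (A2 × B2) B2 ℂ)
    (hG : ∑ k, (G k)ᴴ * G k = 1)
    (X : Matrix (A1 × (B1 × (A2 × (B2 × (Ei × Ri)))))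
      (A1 × (B1 × (A2 × (B2 × (Ei × Ri))))) ℂ) :
    (applyRec2 G (ptrA2 X)).trace = X.trace := by
  rw [kraus_rep, Matrix.trace_sum]
  have h1 : ∀ k : Fin n2, (∑ a : A2, krausE G k a * X * (krausE G k a)ᴴ).trace
      = ∑ a : A2, ((krausE G k a)ᴴ * krausE G k a * X).trace := by
    intro k
    rw [Matrix.trace_sum]
    exact Finset.sum_congr rfl fun a _ => by
      rw [Matrix.trace_mul_comm, ← Matrix.mul_assoc]
  simp only [h1]
  have h2 : (∑ k, ∑ a : A2, ((krausE G k a)ᴴ * krausE G k a * X).trace)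
      = ((∑ k, ∑ a : A2, (krausE G k a)ᴴ * krausE G k a) * X).trace := by
    simp only [Finset.sum_mul, Matrix.trace_sum]
  rw [h2, kraus_complete G hG, Matrix.one_mul]

lemma psi2_herm {n2 : ℕ} (G : Fin n2 → Matrix (A2 × B2) B2 ℂ)
    {X : Matrix (A1 × (B1 × (A2 × (B2 × (Ei × Ri)))))
      (A1 × (B1 × (A2 × (B2 × (Ei × Ri))))) ℂ} (hX : X.IsHermitian) :
    (applyRec2 G (ptrA2 X)).IsHermitian := by
  rw [kraus_rep, Matrix.IsHermitian, Matrix.conjTranspose_sum]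
  refine Finset.sum_congr rfl fun k _ => ?_
  rw [Matrix.conjTranspose_sum]
  refine Finset.sum_congr rfl fun a _ => ?_
  simp only [Matrix.conjTranspose_mul, Matrix.conjTranspose_conjTranspose, hX.eq,
    Matrix.mul_assoc]

lemma psi2_sub {n2 : ℕ} (G : Fin n2 → Matrix (A2 × B2) B2 ℂ)
    (X Y : Matrix (A1 × (B1 × (A2 × (B2 × (Ei × Ri)))))
      (A1 × (B1 × (A2 × (B2 × (Ei × Ri))))) ℂ) :
    applyRec2 G (ptrA2 (X - Y)) = applyRec2 G (ptrA2 X) - applyRec2 G (ptrA2 Y) := by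
  ext p q
  simp [applyRec2, ptrA2, Matrix.sub_apply, Finset.sum_sub_distrib, mul_sub, sub_mul]

lemma herm1 {n1 : ℕ} (F : Fin n1 → Matrix (A1 × B1) B1 ℂ)
    {ρ : Matrix (A1 × (B1 × (A2 × (B2 × (Ei × Ri)))))
      (A1 × (B1 × (A2 × (B2 × (Ei × Ri))))) ℂ} (hρ : ρ.IsHermitian) :
    (applyRec1 F (ptrA1 ρ)).IsHermitian := by
  have hptr : ∀ u v, star (ptrA1 ρ u v) = ptrA1 ρ v u := by
    intro u v
    simp only [ptrA1, Matrix.of_apply, star_sum]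
    refine Finset.sum_congr rfl fun a _ => ?_
    have := congrFun (congrFun hρ (a, v)) (a, u)
    simpa [Matrix.conjTranspose_apply] using this
  rw [Matrix.IsHermitian]
  ext p q
  simp only [Matrix.conjTranspose_apply, applyRec1, Matrix.of_apply, star_sum, star_mul',
    star_star, starRingEnd_apply]
  refine Finset.sum_congr rfl fun k _ => ?_
  rw [Finset.sum_comm]
  refine Finset.sum_congr rfl fun b _ => ?_
  refine Finset.sum_congr rfl fun b' _ => ?_
  rw [hptr]
  ring

lemma ptrA2_applyRec1 {n1 : ℕ} (F : Fin n1 → Matrix (A1 × B1) B1 ℂ)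
    (ρ : Matrix (A1 × (B1 × (A2 × (B2 × (Ei × Ri)))))
      (A1 × (B1 × (A2 × (B2 × (Ei × Ri))))) ℂ)
    (u v : A1 × (B1 × (B2 × (Ei × Ri)))) :
    ptrA2 (applyRec1 F (ptrA1 ρ)) u v
      = ∑ k1, ∑ β : B1, ∑ β' : B1, F k1 (u.1, u.2.1) β *
          ptrA1A2 ρ (β, u.2.2) (β', v.2.2) * (starRingEnd ℂ) (F k1 (v.1, v.2.1) β') := by
  simp only [ptrA2, applyRec1, ptrA1, ptrA1A2, Matrix.of_apply]
  rw [Finset.sum_comm]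
  refine Finset.sum_congr rfl fun k1 _ => ?_
  rw [Finset.sum_comm]
  refine Finset.sum_congr rfl fun β _ => ?_
  rw [Finset.sum_comm]
  refine Finset.sum_congr rfl fun β' _ => ?_
  rw [← Finset.sum_mul, ← Finset.mul_sum, Finset.sum_comm]

lemma comp_eq {n1 n2 : ℕ} (F : Fin n1 → Matrix (A1 × B1) B1 ℂ)
    (G : Fin n2 → Matrix (A2 × B2) B2 ℂ)
    (ρ : Matrix (A1 × (B1 × (A2 × (B2 × (Ei × Ri)))))
      (A1 × (B1 × (A2 × (B2 × (Ei × Ri))))) ℂ) :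
    applyRec12 F G (ptrA1A2 ρ) = applyRec2 G (ptrA2 (applyRec1 F (ptrA1 ρ))) := by
  ext p q
  simp only [applyRec12, applyRec2, Matrix.of_apply, ptrA2_applyRec1,
    Finset.mul_sum, Finset.sum_mul]
  have hL : (∑ z : Fin n1 × Fin n2 × B1 × B1 × B2 × B2,
      F z.1 (p.1, p.2.1) z.2.2.1 * G z.2.1 (p.2.2.1, p.2.2.2.1) z.2.2.2.2.1 *
        ptrA1A2 ρ (z.2.2.1, z.2.2.2.2.1, p.2.2.2.2) (z.2.2.2.1, z.2.2.2.2.2, q.2.2.2.2) *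
        (starRingEnd ℂ) (G z.2.1 (q.2.2.1, q.2.2.2.1) z.2.2.2.2.2) *
        (starRingEnd ℂ) (F z.1 (q.1, q.2.1) z.2.2.2.1))
      = ∑ k1, ∑ k2, ∑ b1 : B1, ∑ b1' : B1, ∑ b2 : B2, ∑ b2' : B2,
        F k1 (p.1, p.2.1) b1 * G k2 (p.2.2.1, p.2.2.2.1) b2 *
          ptrA1A2 ρ (b1, b2, p.2.2.2.2) (b1', b2', q.2.2.2.2) *
          (starRingEnd ℂ) (G k2 (q.2.2.1, q.2.2.2.1) b2') *
          (starRingEnd ℂ) (F k1 (q.1, q.2.1) b1') := by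
    simp only [Fintype.sum_prod_type]
  have hR : (∑ w : Fin n2 × B2 × B2 × Fin n1 × B1 × B1,
      G w.1 (p.2.2.1, p.2.2.2.1) w.2.1 *
        (F w.2.2.2.1 (p.1, p.2.1) w.2.2.2.2.1 *
          ptrA1A2 ρ (w.2.2.2.2.1, w.2.1, p.2.2.2.2) (w.2.2.2.2.2, w.2.2.1, q.2.2.2.2) *
          (starRingEnd ℂ) (F w.2.2.2.1 (q.1, q.2.1) w.2.2.2.2.2)) *
        (starRingEnd ℂ) (G w.1 (q.2.2.1, q.2.2.2.1) w.2.2.1))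
      = ∑ k2, ∑ b2 : B2, ∑ b2' : B2, ∑ k1, ∑ b1 : B1, ∑ b1' : B1,
        G k2 (p.2.2.1, p.2.2.2.1) b2 *
          (F k1 (p.1, p.2.1) b1 * ptrA1A2 ρ (b1, b2, p.2.2.2.2) (b1', b2', q.2.2.2.2) *
            (starRingEnd ℂ) (F k1 (q.1, q.2.1) b1')) *
          (starRingEnd ℂ) (G k2 (q.2.2.1, q.2.2.2.1) b2') := by
    simp only [Fintype.sum_prod_type]
  rw [← hL, ← hR]
  refine Fintype.sum_equiv
    ⟨fun z => (z.2.1, z.2.2.2.2.1, z.2.2.2.2.2, z.1, z.2.2.1, z.2.2.2.1),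
     fun w => (w.2.2.2.1, w.1, w.2.2.2.2.1, w.2.2.2.2.2, w.2.1, w.2.2.1),
     fun _ => rfl, fun _ => rfl⟩ _ _ (fun z => by simp only [Equiv.coe_fn_mk]; ring)

lemma psi2_contract {n2 : ℕ} (G : Fin n2 → Matrix (A2 × B2) B2 ℂ)
    (hG : ∑ k, (G k)ᴴ * G k = 1)
    {X : Matrix (A1 × (B1 × (A2 × (B2 × (Ei × Ri)))))
      (A1 × (B1 × (A2 × (B2 × (Ei × Ri))))) ℂ} (hX : X.IsHermitian) :
    traceNorm (applyRec2 G (ptrA2 X)) ≤ traceNorm X := by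
  have hd : X = UL.ppart hX - UL.npart hX := (UL.ppart_sub_npart hX).symm
  have hPpsd := UL.ppart_psd hX
  have hNpsd := UL.npart_psd hX
  have hsplit : applyRec2 G (ptrA2 X)
      = applyRec2 G (ptrA2 (UL.ppart hX)) - applyRec2 G (ptrA2 (UL.npart hX)) := by
    conv_lhs => rw [hd]
    rw [psi2_sub]
  have hP2 := psi2_psd G hPpsd
  have hN2 := psi2_psd G hNpsd
  rw [hsplit, sub_eq_add_neg]
  refine le_trans (UL.traceNorm_add_le hP2.1 hN2.1.neg) ?_
  rw [UL.traceNorm_neg, UL.traceNorm_psd hP2, UL.traceNorm_psd hN2,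
    psi2_trace G hG, psi2_trace G hG, UL.traceNorm_herm hX]

end UnionLemmaAux

/-- union lemma. If the erasures of `A₁` and `A₂` are locally correctable
(with recovery channels supported on `A₁B₁` and `A₂B₂` respectively) up to errors `ε₁` and
`ε₂` uniformly on a set `S` of density matrices, then the joint erasure of `A₁A₂` is locally
correctable up to error `ε₁ + ε₂`. -/
theorem union_lemma
    (S : Set (Matrix (A1 × (B1 × (A2 × (B2 × (Ei × Ri)))))
      (A1 × (B1 × (A2 × (B2 × (Ei × Ri))))) ℂ))
    (hS : ∀ ρ ∈ S, ρ.PosSemidef ∧ ρ.trace = 1)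
    (ε1 ε2 : ℝ) (hε1 : 0 ≤ ε1) (hε2 : 0 ≤ ε2)
    (n1 n2 : ℕ) (F : Fin n1 → Matrix (A1 × B1) B1 ℂ) (G : Fin n2 → Matrix (A2 × B2) B2 ℂ)
    (hF : ∑ k, (F k)ᴴ * F k = 1) (hG : ∑ k, (G k)ᴴ * G k = 1)
    (hrec1 : ∀ ρ ∈ S, traceNorm (applyRec1 F (ptrA1 ρ) - ρ) ≤ ε1)
    (hrec2 : ∀ ρ ∈ S, traceNorm (applyRec2 G (ptrA2 ρ) - ρ) ≤ ε2) :
    ∀ ρ ∈ S, traceNorm (applyRec12 F G (ptrA1A2 ρ) - ρ) ≤ ε1 + ε2 := by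
  intro ρ hρS
  obtain ⟨hpsd, -⟩ := hS ρ hρS
  have hρh : ρ.IsHermitian := hpsd.1
  have hσh : (applyRec1 F (ptrA1 ρ)).IsHermitian := herm1 F hρh
  have hkey : applyRec12 F G (ptrA1A2 ρ) - ρ
      = (applyRec2 G (ptrA2 (applyRec1 F (ptrA1 ρ) - ρ)))
        + (applyRec2 G (ptrA2 ρ) - ρ) := by
    rw [comp_eq F G ρ, psi2_sub]
    abel
  rw [hkey]
  have hherm1 : (applyRec2 G (ptrA2 (applyRec1 F (ptrA1 ρ) - ρ))).IsHermitian :=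
    psi2_herm G (hσh.sub hρh)
  have hherm2 : (applyRec2 G (ptrA2 ρ) - ρ).IsHermitian := (psi2_herm G hρh).sub hρh
  refine le_trans (UL.traceNorm_add_le hherm1 hherm2) ?_
  have h1 : traceNorm (applyRec2 G (ptrA2 (applyRec1 F (ptrA1 ρ) - ρ))) ≤ ε1 :=
    le_trans (psi2_contract G hG (hσh.sub hρh)) (hrec1 ρ hρS)
  have h2 : traceNorm (applyRec2 G (ptrA2 ρ) - ρ) ≤ ε2 := hrec2 ρ hρS
  linarith


end UnionLemma
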